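/- Subgraph criterion for magnetic sparseness: Let (b,θ,q,m) be a magnetic graph over X, p ∈ [1,∞), J an index set, a, k ≥ 0, C > c > 0 and M > 0. Suppose (b_j,θ,q_j,m_j)_{j∈J} is a family of magnetic graphs over X, each (a,k)_p-magnetic-sparse with the same magnetic potential θ, such that for all x, y ∈ X: (a) c·b(x,y) ≤ Σ_{j∈J} b_j(x,y) ≤ C·b(x,y); (b) Σ_{j∈J} q_{j,+}(x) m_j(x) ≤ C·q₊(x) m(x); (c) Σ_{j∈J} m_j(x) ≤ M·m(x). Then (b,θ,q,m) is (aC/c + C/c − 1, Mk/c)_p-magnetic-sparse. Moreover, if k = 0, conditions (a) and (b) alone imply that (b,θ,q,m) is (aC/c + C/c − 1, 0)_p-magnetic-sparse. -/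

import Mathlib

open Complex MeasureTheory
open scoped Classical

noncomputable section

variable {X : Type*}

/-- The structural hypotheses of a magnetic graph `(b, θ, q, m)` over `X`:
`b` is nonnegative, symmetric, has zero diagonal and summable rows; the
magnetic potential `θ` is antisymmetric modulo `2π`; the measure `m` is positive. -/
def IsMagneticGraph (b θ : X → X → ℝ) (m : X → ℝ) : Prop :=
  (∀ x y, 0 ≤ b x y) ∧ (∀ x y, b x y = b y x) ∧ (∀ x, b x x = 0) ∧
  (∀ x, Summable fun y => b x y) ∧
  (∀ x y, ∃ k : ℤ, θ x y + θ y x = 2 * Real.pi * k) ∧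
  (∀ x, 0 < m x)

/-- The `p`-frustration index `ι_{p,θ}(W)` of a finite set `W`. -/
def frust (b θ : X → X → ℝ) (p : ℝ) (W : Finset X) : ℝ :=
  sInf {r : ℝ | ∃ τ : X → ℂ, (∀ x ∈ W, ‖τ x‖ = 1) ∧
    r = (1 / 2) * ∑ x ∈ W, ∑ y ∈ W,
      b x y * ‖τ x - Complex.exp ((θ x y : ℂ) * Complex.I) * τ y‖ ^ p}

/-- The measure `b(∂W)` of the boundary `∂W = (W×(X∖W)) ∪ ((X∖W)×W)`. -/
def bBoundary (b : X → X → ℝ) (W : Finset X) : ℝ :=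
  (∑ x ∈ W, ∑' y : {y : X // y ∉ W}, b x ↑y) +
  (∑ y ∈ W, ∑' x : {x : X // x ∉ W}, b ↑x y)

/-- `(a,k)_p`-magnetic-sparseness. -/
def MagSparse (b θ : X → X → ℝ) (q m : X → ℝ) (p a k : ℝ) : Prop :=
  ∀ W : Finset X,
    (∑ x ∈ W, ∑ y ∈ W, b x y) ≤
      (1 + a) * frust b θ p W +
      a * ((1 / 2) * bBoundary b W + ∑ x ∈ W, max (q x) 0 * m x) +
      k * ∑ x ∈ W, m x

/-- The energy functional `Q_{p,θ}` on finitely supported functions. -/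
def Qform (b θ : X → X → ℝ) (q m : X → ℝ) (p : ℝ) (f : X → ℂ) : ℝ :=
  (1 / 2) * ∑' x, ∑' y, b x y * ‖f x - Complex.exp ((θ x y : ℂ) * Complex.I) * f y‖ ^ p +
  ∑' x, q x * ‖f x‖ ^ p * m x

/-- The weighted vertex degree `Deg(x) = (1/m(x)) Σ_y b(x,y) + q(x)`. -/
def Degf (b : X → X → ℝ) (q m : X → ℝ) (x : X) : ℝ :=
  (1 / m x) * ∑' y, b x y + q x

/-- The pairing `⟨Deg, |f|^p⟩ = Σ_x Deg(x) |f(x)|^p m(x)`. -/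
def degPair (b : X → X → ℝ) (q m : X → ℝ) (p : ℝ) (f : X → ℂ) : ℝ :=
  ∑' x, Degf b q m x * ‖f x‖ ^ p * m x

/-- The `p`-norm to the `p`: `‖f‖_p^p = Σ_x |f(x)|^p m(x)`. -/
def pNorm (m : X → ℝ) (p : ℝ) (f : X → ℂ) : ℝ :=
  ∑' x, ‖f x‖ ^ p * m x

/-- `q ∈ K_α^{p,θ}` with constant `C`: the negative part of `q` is form bounded. -/
def InKClass (b θ : X → X → ℝ) (q m : X → ℝ) (p α C : ℝ) : Prop :=
  ∀ f : X → ℂ, (Function.support f).Finite →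
    (∑' x, max (-q x) 0 * ‖f x‖ ^ p * m x) ≤
      α * Qform b θ (fun x => max (q x) 0) m p f + C * pNorm m p f

private lemma swap_bound' {J Y : Type*} (g : J → Y → ℝ) (h : Y → ℝ) (C : ℝ)
    (hg : ∀ j y, 0 ≤ g j y)
    (hsum : ∀ y, Summable fun j => g j y)
    (hle : ∀ y, (∑' j, g j y) ≤ C * h y)
    (hh : Summable h) :
    Summable (fun j => ∑' y, g j y) ∧ (∑' j, ∑' y, g j y) ≤ C * ∑' y, h y := by
  have hf' : Summable (fun yj : Y × J => g yj.2 yj.1) := by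
    rw [summable_prod_of_nonneg (fun yj => hg yj.2 yj.1)]
    exact ⟨hsum, Summable.of_nonneg_of_le (fun y => tsum_nonneg fun j => hg j y) hle (hh.mul_left C)⟩
  have hf : Summable (fun jy : J × Y => g jy.1 jy.2) := by
    have := (Equiv.prodComm Y J).summable_iff (f := fun jy : J × Y => g jy.1 jy.2)
    exact this.mp hf'
  obtain ⟨_, hsum2⟩ := (summable_prod_of_nonneg (fun jy => hg jy.1 jy.2)).mp hf
  refine ⟨hsum2, ?_⟩
  have e1 : (∑' j, ∑' y, g j y) = ∑' jy : J × Y, g jy.1 jy.2 := (Summable.tsum_prod hf).symm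
  have e2 : (∑' jy : J × Y, g jy.1 jy.2) = ∑' yj : Y × J, g yj.2 yj.1 :=
    ((Equiv.prodComm Y J).tsum_eq _).symm
  have e3 : (∑' yj : Y × J, g yj.2 yj.1) = ∑' y, ∑' j, g j y := Summable.tsum_prod hf'
  rw [e1, e2, e3]
  calc (∑' y, ∑' j, g j y) ≤ ∑' y, C * h y :=
        Summable.tsum_le_tsum hle ((summable_prod_of_nonneg (fun yj => hg yj.2 yj.1)).mp hf').2 (hh.mul_left C)
    _ = C * ∑' y, h y := tsum_mul_left

/-- subgraph criterion: if a family `(b_j, θ, q_j, m_j)_{j∈J}` of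
`(a,k)_p`-magnetic-sparse graphs satisfies
(a) `c·b ≤ Σ_j b_j ≤ C·b`, (b) `Σ_j q_{j,+} m_j ≤ C·q₊ m` and (c) `Σ_j m_j ≤ M·m`,
then `(b,θ,q,m)` is `(aC/c + C/c − 1, Mk/c)_p`-magnetic-sparse; if `k = 0`,
conditions (a) and (b) alone give `(aC/c + C/c − 1, 0)_p`-magnetic-sparseness. -/
theorem subgraph_criterion [Countable X]
    (b θ : X → X → ℝ) (q m : X → ℝ) (hG : IsMagneticGraph b θ m)
    (p : ℝ) (hp : 1 ≤ p)
    (J : Type*) (bj : J → X → X → ℝ) (qj : J → X → ℝ) (mj : J → X → ℝ)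
    (hGj : ∀ j, IsMagneticGraph (bj j) θ (mj j))
    (a k : ℝ) (ha : 0 ≤ a) (hk : 0 ≤ k)
    (c C M : ℝ) (hc : 0 < c) (hcC : c < C) (hM : 0 < M)
    (hsj : ∀ j, MagSparse (bj j) θ (qj j) (mj j) p a k)
    (hbsum : ∀ x y, Summable fun j => bj j x y)
    (hbl : ∀ x y, c * b x y ≤ ∑' j, bj j x y)
    (hbu : ∀ x y, (∑' j, bj j x y) ≤ C * b x y)
    (hqsum : ∀ x, Summable fun j => max (qj j x) 0 * mj j x)
    (hqu : ∀ x, (∑' j, max (qj j x) 0 * mj j x) ≤ C * (max (q x) 0 * m x)) :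
    ((∀ x, Summable fun j => mj j x) → (∀ x, (∑' j, mj j x) ≤ M * m x) →
      MagSparse b θ q m p (a * C / c + C / c - 1) (M * k / c)) ∧
    (k = 0 → MagSparse b θ q m p (a * C / c + C / c - 1) 0) := by
  obtain ⟨hb0, hbsymm, hbdiag, hbrow, -, hm0⟩ := hG
  have key : ∀ (W : Finset X),
      Summable (fun j => k * ∑ x ∈ W, mj j x) →
      (∑' j, k * ∑ x ∈ W, mj j x) ≤ M * k * ∑ x ∈ W, m x →
      (∑ x ∈ W, ∑ y ∈ W, b x y) ≤
        (1 + (a * C / c + C / c - 1)) * frust b θ p W +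
        (a * C / c + C / c - 1) * ((1 / 2) * bBoundary b W + ∑ x ∈ W, max (q x) 0 * m x) +
        (M * k / c) * ∑ x ∈ W, m x := by
    intro W hksum hkle
    -- nonnegativity of frustration-set elements
    have helt : ∀ (b' : X → X → ℝ), (∀ x y, 0 ≤ b' x y) → ∀ τ : X → ℂ,
        0 ≤ (1 / 2) * ∑ x ∈ W, ∑ y ∈ W,
          b' x y * ‖τ x - Complex.exp ((θ x y : ℂ) * Complex.I) * τ y‖ ^ p := by
      intro b' hb' τ
      refine mul_nonneg (by norm_num) (Finset.sum_nonneg fun x _ => Finset.sum_nonneg fun y _ =>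
        mul_nonneg (hb' x y) (Real.rpow_nonneg (norm_nonneg _) _))
    have hbdd : ∀ (b' : X → X → ℝ), (∀ x y, 0 ≤ b' x y) →
        BddBelow {r : ℝ | ∃ τ : X → ℂ, (∀ x ∈ W, ‖τ x‖ = 1) ∧
          r = (1 / 2) * ∑ x ∈ W, ∑ y ∈ W,
            b' x y * ‖τ x - Complex.exp ((θ x y : ℂ) * Complex.I) * τ y‖ ^ p} := by
      intro b' hb'
      exact ⟨0, by rintro r ⟨τ, -, rfl⟩; exact helt b' hb' τ⟩
    have hSne : Set.Nonempty {r : ℝ | ∃ τ : X → ℂ, (∀ x ∈ W, ‖τ x‖ = 1) ∧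
        r = (1 / 2) * ∑ x ∈ W, ∑ y ∈ W,
          b x y * ‖τ x - Complex.exp ((θ x y : ℂ) * Complex.I) * τ y‖ ^ p} :=
      ⟨_, fun _ => (1 : ℂ), fun x _ => norm_one, rfl⟩
    have hInn : 0 ≤ frust b θ p W := by
      unfold frust
      exact le_csInf hSne (by rintro r ⟨τ, -, rfl⟩; exact helt b hb0 τ)
    have hB2 : 0 ≤ (1 / 2) * bBoundary b W + ∑ x ∈ W, max (q x) 0 * m x := by
      have h1 : 0 ≤ bBoundary b W := by
        refine add_nonneg (Finset.sum_nonneg fun x _ => tsum_nonneg fun y => hb0 _ _)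
          (Finset.sum_nonneg fun y _ => tsum_nonneg fun x => hb0 _ _)
      have h2 : 0 ≤ ∑ x ∈ W, max (q x) 0 * m x :=
        Finset.sum_nonneg fun x _ => mul_nonneg (le_max_right _ _) (hm0 x).le
      linarith
    -- boundary estimates
    have hbd1 : ∀ x : X, Summable (fun j => ∑' y : {y : X // y ∉ W}, bj j x ↑y) ∧
        (∑' j, ∑' y : {y : X // y ∉ W}, bj j x ↑y) ≤ C * ∑' y : {y : X // y ∉ W}, b x ↑y :=
      fun x => swap_bound' (fun j (y : {y : X // y ∉ W}) => bj j x ↑y) (fun y => b x ↑y) C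
        (fun j y => (hGj j).1 x ↑y) (fun y => hbsum x ↑y) (fun y => hbu x ↑y)
        ((hbrow x).subtype _)
    have hbd2 : ∀ y : X, Summable (fun j => ∑' x : {x : X // x ∉ W}, bj j ↑x y) ∧
        (∑' j, ∑' x : {x : X // x ∉ W}, bj j ↑x y) ≤ C * ∑' x : {x : X // x ∉ W}, b ↑x y := by
      intro y
      have hby : Summable (fun x => b x y) := (hbrow y).congr (fun x => hbsymm y x)
      exact swap_bound' (fun j (x : {x : X // x ∉ W}) => bj j ↑x y) (fun x => b ↑x y) C
        (fun j x => (hGj j).1 ↑x y) (fun x => hbsum ↑x y) (fun x => hbu ↑x y)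
        (hby.subtype _)
    have hBdsum : Summable (fun j => bBoundary (bj j) W) := by
      unfold bBoundary
      exact (Summable.add (summable_sum fun x _ => (hbd1 x).1)
        (summable_sum fun y _ => (hbd2 y).1))
    have hBdle : (∑' j, bBoundary (bj j) W) ≤ C * bBoundary b W := by
      unfold bBoundary
      rw [Summable.tsum_add (summable_sum fun x _ => (hbd1 x).1) (summable_sum fun y _ => (hbd2 y).1),
        Summable.tsum_finsetSum (fun x _ => (hbd1 x).1), Summable.tsum_finsetSum (fun y _ => (hbd2 y).1), mul_add,
        Finset.mul_sum, Finset.mul_sum]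
      exact add_le_add (Finset.sum_le_sum fun x _ => (hbd1 x).2)
        (Finset.sum_le_sum fun y _ => (hbd2 y).2)
    -- potential estimate
    have hQsum : Summable (fun j => ∑ x ∈ W, max (qj j x) 0 * mj j x) :=
      summable_sum fun x _ => hqsum x
    have hQle : (∑' j, ∑ x ∈ W, max (qj j x) 0 * mj j x) ≤ C * ∑ x ∈ W, max (q x) 0 * m x := by
      rw [Summable.tsum_finsetSum (fun x _ => hqsum x), Finset.mul_sum]
      exact Finset.sum_le_sum fun x _ => hqu x
    -- sum-over-j of the sparseness inequalities, for every frustration competitor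
    have main : ∀ r ∈ {r : ℝ | ∃ τ : X → ℂ, (∀ x ∈ W, ‖τ x‖ = 1) ∧
        r = (1 / 2) * ∑ x ∈ W, ∑ y ∈ W,
          b x y * ‖τ x - Complex.exp ((θ x y : ℂ) * Complex.I) * τ y‖ ^ p},
        c * (∑ x ∈ W, ∑ y ∈ W, b x y) ≤ (1 + a) * C * r +
          a * C * ((1 / 2) * bBoundary b W + ∑ x ∈ W, max (q x) 0 * m x) +
          M * k * ∑ x ∈ W, m x := by
      rintro r ⟨τ, hτ, rfl⟩
      set t : X → X → ℝ := fun x y => ‖τ x - Complex.exp ((θ x y : ℂ) * Complex.I) * τ y‖ ^ p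
        with ht_def
      have ht : ∀ x y, 0 ≤ t x y := fun x y => Real.rpow_nonneg (norm_nonneg _) _
      -- per-j bound
      have hLle : ∀ j, (∑ x ∈ W, ∑ y ∈ W, bj j x y) ≤
          (1 + a) * ((1 / 2) * ∑ x ∈ W, ∑ y ∈ W, bj j x y * t x y) +
          a * ((1 / 2) * bBoundary (bj j) W + ∑ x ∈ W, max (qj j x) 0 * mj j x) +
          k * ∑ x ∈ W, mj j x := by
        intro j
        have h1 := hsj j W
        have h2 : frust (bj j) θ p W ≤ (1 / 2) * ∑ x ∈ W, ∑ y ∈ W, bj j x y * t x y := by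
          unfold frust
          exact csInf_le (hbdd (bj j) (hGj j).1) ⟨τ, hτ, rfl⟩
        have h3 := mul_le_mul_of_nonneg_left h2 (by linarith : (0:ℝ) ≤ 1 + a)
        linarith
      -- summabilities
      have hsumL : Summable (fun j => ∑ x ∈ W, ∑ y ∈ W, bj j x y) :=
        summable_sum fun x _ => summable_sum fun y _ => hbsum x y
      have hsumF0 : Summable (fun j => ∑ x ∈ W, ∑ y ∈ W, bj j x y * t x y) :=
        summable_sum fun x _ => summable_sum fun y _ => (hbsum x y).mul_right _
      have hsumF : Summable (fun j => (1 / 2) * ∑ x ∈ W, ∑ y ∈ W, bj j x y * t x y) :=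
        hsumF0.mul_left _
      have hsumRHS : Summable (fun j =>
          (1 + a) * ((1 / 2) * ∑ x ∈ W, ∑ y ∈ W, bj j x y * t x y) +
          a * ((1 / 2) * bBoundary (bj j) W + ∑ x ∈ W, max (qj j x) 0 * mj j x) +
          k * ∑ x ∈ W, mj j x) :=
        (((hsumF.mul_left _).add (((hBdsum.mul_left _).add hQsum).mul_left _ )).add hksum)
      -- lower bound on the sum
      have hchain : c * (∑ x ∈ W, ∑ y ∈ W, b x y) ≤ ∑' j, ∑ x ∈ W, ∑ y ∈ W, bj j x y := by
        have e : (∑' j, ∑ x ∈ W, ∑ y ∈ W, bj j x y) = ∑ x ∈ W, ∑ y ∈ W, ∑' j, bj j x y := by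
          rw [Summable.tsum_finsetSum (fun x _ => summable_sum fun y _ => hbsum x y)]
          exact Finset.sum_congr rfl fun x _ => Summable.tsum_finsetSum fun y _ => hbsum x y
        rw [e, Finset.mul_sum]
        refine Finset.sum_le_sum fun x _ => ?_
        rw [Finset.mul_sum]
        exact Finset.sum_le_sum fun y _ => hbl x y
      have htle : (∑' j, ∑ x ∈ W, ∑ y ∈ W, bj j x y) ≤ ∑' j,
          ((1 + a) * ((1 / 2) * ∑ x ∈ W, ∑ y ∈ W, bj j x y * t x y) +
          a * ((1 / 2) * bBoundary (bj j) W + ∑ x ∈ W, max (qj j x) 0 * mj j x) +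
          k * ∑ x ∈ W, mj j x) :=
        Summable.tsum_le_tsum hLle hsumL hsumRHS
      -- split the right tsum
      have hsplit : (∑' j,
          ((1 + a) * ((1 / 2) * ∑ x ∈ W, ∑ y ∈ W, bj j x y * t x y) +
          a * ((1 / 2) * bBoundary (bj j) W + ∑ x ∈ W, max (qj j x) 0 * mj j x) +
          k * ∑ x ∈ W, mj j x)) =
          (1 + a) * ((1 / 2) * ∑' j, ∑ x ∈ W, ∑ y ∈ W, bj j x y * t x y) +
          a * ((1 / 2) * (∑' j, bBoundary (bj j) W) +
            ∑' j, ∑ x ∈ W, max (qj j x) 0 * mj j x) +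
          ∑' j, k * ∑ x ∈ W, mj j x := by
        rw [Summable.tsum_add ((hsumF.mul_left _).add (((hBdsum.mul_left _).add hQsum).mul_left _)) hksum,
          Summable.tsum_add (hsumF.mul_left _) (((hBdsum.mul_left _).add hQsum).mul_left _),
          tsum_mul_left, tsum_mul_left, tsum_mul_left,
          Summable.tsum_add (hBdsum.mul_left _) hQsum, tsum_mul_left]
      -- bound the F term
      have hF : (∑' j, ∑ x ∈ W, ∑ y ∈ W, bj j x y * t x y) ≤
          C * ∑ x ∈ W, ∑ y ∈ W, b x y * t x y := by
        have e : (∑' j, ∑ x ∈ W, ∑ y ∈ W, bj j x y * t x y) =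
            ∑ x ∈ W, ∑ y ∈ W, (∑' j, bj j x y) * t x y := by
          rw [Summable.tsum_finsetSum (fun x _ => summable_sum fun y _ => (hbsum x y).mul_right _)]
          refine Finset.sum_congr rfl fun x _ => ?_
          rw [Summable.tsum_finsetSum (fun y _ => (hbsum x y).mul_right _)]
          exact Finset.sum_congr rfl fun y _ => tsum_mul_right
        rw [e, Finset.mul_sum]
        refine Finset.sum_le_sum fun x _ => ?_
        rw [Finset.mul_sum]
        refine Finset.sum_le_sum fun y _ => ?_
        rw [← mul_assoc]
        exact mul_le_mul_of_nonneg_right (hbu x y) (ht x y)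
      have h1a : (0:ℝ) ≤ 1 + a := by linarith
      have hFmul := mul_le_mul_of_nonneg_left hF (by linarith : (0:ℝ) ≤ (1 + a) * (1/2))
      have hBdmul := mul_le_mul_of_nonneg_left hBdle (by linarith : (0:ℝ) ≤ a * (1/2))
      have hQmul := mul_le_mul_of_nonneg_left hQle ha
      nlinarith [hchain, htle, hsplit, hkle]
    -- conclude via the infimum
    have hz : (0:ℝ) < (1 + a) * C := by nlinarith
    have hle_inf : (c * (∑ x ∈ W, ∑ y ∈ W, b x y) -
        a * C * ((1 / 2) * bBoundary b W + ∑ x ∈ W, max (q x) 0 * m x) -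
        M * k * ∑ x ∈ W, m x) / ((1 + a) * C) ≤ frust b θ p W := by
      unfold frust
      refine le_csInf hSne fun r hr => ?_
      rw [div_le_iff₀ hz]
      have := main r hr
      nlinarith [this]
    have hfin := (div_le_iff₀ hz).mp hle_inf
    have hiden : c * ((1 + (a * C / c + C / c - 1)) * frust b θ p W +
        (a * C / c + C / c - 1) * ((1 / 2) * bBoundary b W + ∑ x ∈ W, max (q x) 0 * m x) +
        (M * k / c) * ∑ x ∈ W, m x) =
        (1 + a) * C * frust b θ p W +
        (a * C + (C - c)) * ((1 / 2) * bBoundary b W + ∑ x ∈ W, max (q x) 0 * m x) +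
        M * k * ∑ x ∈ W, m x := by
      field_simp
      ring
    rw [← mul_le_mul_iff_right₀ hc, hiden]
    have hcc : 0 ≤ (C - c) * ((1 / 2) * bBoundary b W + ∑ x ∈ W, max (q x) 0 * m x) :=
      mul_nonneg (by linarith) hB2
    nlinarith [hfin, hcc]
  constructor
  · intro hmsum hmle W
    refine key W ((summable_sum fun x _ => hmsum x).mul_left k) ?_
    rw [tsum_mul_left, Summable.tsum_finsetSum (fun x _ => hmsum x)]
    have : (∑ x ∈ W, ∑' j, mj j x) ≤ ∑ x ∈ W, M * m x :=
      Finset.sum_le_sum fun x _ => hmle x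
    rw [← Finset.mul_sum] at this
    nlinarith
  · intro hk0
    subst hk0
    intro W
    have := key W (by simpa using summable_zero) (by simp)
    simpa using this
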